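/- Orthogonal greedy algorithm error decay: let V be a Hilbert space, D \subset V a dictionary of unit-norm elements, \varphi \in L_1(D) where \|\varphi\|_{L_1(D)} = inf{\sum_i |c_i| : \varphi = \sum_i c_i g_i, g_i \in D}. Define \varphi_0 = 0 and iteratively g_n = argmax_{g \in D} \langle g, \varphi - \varphi_{n-1} \rangle, \varphi_n = orthogonal projection of \varphi onto span{g_1, ..., g_n}. Then \|\varphi - \varphi_n\| \leq \|\varphi\|_{L_1(D)} (n+1)^{-1/2}. -/

import Mathlib

/-- Numerical recursion lemma: if `a 0 ≤ K`, `a` nonnegative, and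
`a (n+1) ≤ a n - (a n)^2 / K`, then `a n ≤ K / (n+1)`. -/
private lemma oga_rec (K : ℝ) (hK : 0 < K) (a : ℕ → ℝ)
    (hnn : ∀ n, 0 ≤ a n) (h0 : a 0 ≤ K)
    (hstep : ∀ n, a (n + 1) ≤ a n - (a n) ^ 2 / K) :
    ∀ n : ℕ, a n ≤ K / (n + 1) := by
  intro n
  induction n with
  | zero => simpa using h0
  | succ m ih =>
    have hm1 : (0:ℝ) < (m:ℝ) + 1 := by positivity
    have hm2 : (0:ℝ) < (m:ℝ) + 2 := by positivity
    have hb : 0 ≤ a m := hnn m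
    have hbc : a m * ((m:ℝ) + 1) ≤ K := by
      rw [le_div_iff₀ hm1] at ih; linarith [ih]
    have hKb : a m ≤ K := by nlinarith
    have key : (a m * K - (a m) ^ 2) * ((m:ℝ) + 2) ≤ K * K := by
      nlinarith [mul_nonneg (sub_nonneg.2 hKb) (sub_nonneg.2 hbc), sq_nonneg (a m)]
    have h1 : a m - (a m) ^ 2 / K = (a m * K - (a m) ^ 2) / K := by
      field_simp
    have h2 : (a m * K - (a m) ^ 2) / K ≤ K / ((m:ℝ) + 2) := by
      rw [div_le_div_iff₀ hK hm2]
      exact key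
    have := (hstep m).trans (h1 ▸ h2)
    push_cast
    convert this using 2
    · rfl
    · ring

/-- Orthogonal greedy algorithm error decay: in a real Hilbert space `V`
with a symmetric unit-norm dictionary `D`, for `φ ∈ L₁(D)` (variation norm
`‖φ‖_{L₁(D)} = inf {∑|cᵢ| : φ = ∑ cᵢ gᵢ, gᵢ ∈ D}`), the OGA iterates
(`φ₀ = 0`, `g_{n}` maximizing `⟨g, φ - φ_{n-1}⟩` over `D`, `φ_n` the orthogonal
projection of `φ` onto `span{g₁, …, g_n}`) satisfy
`‖φ - φ_n‖ ≤ ‖φ‖_{L₁(D)} (n+1)^{-1/2}`. -/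
theorem stmt12 {V : Type*} [NormedAddCommGroup V] [InnerProductSpace ℝ V]
    [CompleteSpace V]
    (D : Set V) (hD : ∀ g ∈ D, ‖g‖ = 1) (hDsymm : ∀ g ∈ D, -g ∈ D)
    (φ : V)
    (S : Set ℝ)
    (hS : S = {M | ∃ (g : ℕ → V) (c : ℕ → ℝ), (∀ k, g k ∈ D) ∧
      Summable (fun k => |c k|) ∧ HasSum (fun k => c k • g k) φ ∧ M = ∑' k, |c k|})
    (hne : S.Nonempty)
    (φs : ℕ → V) (g : ℕ → V)
    (hφ0 : φs 0 = 0)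
    (hgmem : ∀ n : ℕ, g (n + 1) ∈ D)
    (hgmax : ∀ n : ℕ, ∀ h ∈ D, (inner ℝ h (φ - φs n) : ℝ) ≤ inner ℝ (g (n + 1)) (φ - φs n))
    (hmem : ∀ n : ℕ, φs (n + 1) ∈ Submodule.span ℝ (g '' Set.Icc 1 (n + 1)))
    (hproj : ∀ n : ℕ, ∀ v ∈ Submodule.span ℝ (g '' Set.Icc 1 (n + 1)),
      (inner ℝ (φ - φs (n + 1)) v : ℝ) = 0)
    (n : ℕ) :
    ‖φ - φs n‖ ≤ sInf S / Real.sqrt (n + 1) := by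
  have hg1 : g 1 ∈ D := hgmem 0
  set t : ℕ → ℝ := fun n => (inner ℝ (g (n + 1)) (φ - φs n) : ℝ) with htdef
  have htn : ∀ n, (inner ℝ (g (n + 1)) (φ - φs n) : ℝ) = t n := fun _ => rfl
  have ht_nonneg : ∀ n, 0 ≤ t n := by
    intro n
    have h1 := hgmax n (g 1) hg1
    have h2 := hgmax n (-(g 1)) (hDsymm _ hg1)
    rw [inner_neg_left] at h2
    rw [← htn n]
    linarith
  have hSnonneg : ∀ m ∈ S, 0 ≤ m := by
    intro m hm
    rw [hS] at hm
    obtain ⟨g', c, _, _, _, rfl⟩ := hm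
    exact tsum_nonneg fun k => abs_nonneg _
  have hM0 : 0 ≤ sInf S := Real.sInf_nonneg hSnonneg
  have horth : ∀ n, (inner ℝ (φ - φs n) (φs n) : ℝ) = 0 := by
    intro n
    cases n with
    | zero => rw [hφ0]; simp
    | succ m => exact hproj m _ (hmem m)
  have hinner_phi : ∀ n, (inner ℝ (φ - φs n) φ : ℝ) = ‖φ - φs n‖ ^ 2 := by
    intro n
    have h1 : (inner ℝ (φ - φs n) φ : ℝ) = inner ℝ (φ - φs n) ((φ - φs n) + φs n) := by
      rw [sub_add_cancel]
    rw [h1, inner_add_right, horth n, add_zero, real_inner_self_eq_norm_sq]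
  -- key estimate per representation
  have hatm : ∀ n, ∀ m ∈ S, ‖φ - φs n‖ ^ 2 ≤ m * t n := by
    intro n m hm
    rw [hS] at hm
    obtain ⟨g', c, hg'D, hcs, hsum, rfl⟩ := hm
    have habs : ∀ k, |(inner ℝ (φ - φs n) (g' k) : ℝ)| ≤ t n := by
      intro k
      rw [abs_le]
      constructor
      · have h2 := hgmax n (-(g' k)) (hDsymm _ (hg'D k))
        rw [inner_neg_left, htn n] at h2
        rw [real_inner_comm]
        linarith
      · have h1 := hgmax n (g' k) (hg'D k)
        rw [htn n] at h1
        rw [real_inner_comm]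
        exact h1
    have hmap : HasSum (fun k => c k * (inner ℝ (φ - φs n) (g' k) : ℝ))
        ((inner ℝ (φ - φs n) φ : ℝ)) := by
      have := (innerSL ℝ (φ - φs n)).hasSum hsum
      simpa only [innerSL_apply_apply, inner_smul_right] using this
    have hle : ∀ k, c k * (inner ℝ (φ - φs n) (g' k) : ℝ) ≤ |c k| * t n := by
      intro k
      calc c k * (inner ℝ (φ - φs n) (g' k) : ℝ)
          ≤ |c k * (inner ℝ (φ - φs n) (g' k) : ℝ)| := le_abs_self _
        _ = |c k| * |(inner ℝ (φ - φs n) (g' k) : ℝ)| := abs_mul _ _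
        _ ≤ |c k| * t n := mul_le_mul_of_nonneg_left (habs k) (abs_nonneg _)
    have hsum2 : Summable (fun k => |c k| * t n) := hcs.mul_right _
    calc ‖φ - φs n‖ ^ 2 = (inner ℝ (φ - φs n) φ : ℝ) := (hinner_phi n).symm
      _ ≤ ∑' k, |c k| * t n := by
          rw [← hmap.tsum_eq]; exact Summable.tsum_le_tsum hle hmap.summable hsum2
      _ = (∑' k, |c k|) * t n := tsum_mul_right
  have hat : ∀ n, ‖φ - φs n‖ ^ 2 ≤ sInf S * t n := by
    intro n
    rcases eq_or_lt_of_le (ht_nonneg n) with h0 | hpos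
    · obtain ⟨m, hm⟩ := hne
      have h := hatm n m hm
      rw [← h0] at h ⊢
      simpa using h
    · have h : ‖φ - φs n‖ ^ 2 / t n ≤ sInf S := by
        apply le_csInf hne
        intro m hm
        rw [div_le_iff₀ hpos]
        exact hatm n m hm
      calc ‖φ - φs n‖ ^ 2 = ‖φ - φs n‖ ^ 2 / t n * t n := by field_simp
        _ ≤ sInf S * t n := mul_le_mul_of_nonneg_right h hpos.le
  -- recursion inequality
  have hrec : ∀ n, ‖φ - φs (n + 1)‖ ^ 2 ≤ ‖φ - φs n‖ ^ 2 - (t n) ^ 2 := by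
    intro n
    set sp := Submodule.span ℝ (g '' Set.Icc 1 (n + 1)) with hsp
    have hgsp : g (n + 1) ∈ sp :=
      Submodule.subset_span ⟨n + 1, ⟨Nat.le_add_left 1 n, le_refl _⟩, rfl⟩
    have hφssp : φs n ∈ sp := by
      cases n with
      | zero => rw [hφ0]; exact Submodule.zero_mem _
      | succ m =>
        exact Submodule.span_mono
          (Set.image_mono (Set.Icc_subset_Icc_right (by omega))) (hmem m)
    have hvsp : φs n + t n • g (n + 1) ∈ sp :=
      Submodule.add_mem _ hφssp (Submodule.smul_mem _ _ hgsp)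
    have hpyth : ‖φ - (φs n + t n • g (n + 1))‖ ^ 2
        = ‖φ - φs (n + 1)‖ ^ 2 + ‖φs (n + 1) - (φs n + t n • g (n + 1))‖ ^ 2 := by
      have hdec : φ - (φs n + t n • g (n + 1))
          = (φ - φs (n + 1)) + (φs (n + 1) - (φs n + t n • g (n + 1))) := by abel
      rw [hdec, norm_add_sq_real, hproj n _ (Submodule.sub_mem _ (hmem n) hvsp)]
      ring
    have hval : ‖φ - (φs n + t n • g (n + 1))‖ ^ 2 = ‖φ - φs n‖ ^ 2 - (t n) ^ 2 := by
      have hdec : φ - (φs n + t n • g (n + 1)) = (φ - φs n) - t n • g (n + 1) := by abel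
      rw [hdec, norm_sub_sq_real, real_inner_smul_right, real_inner_comm, htn n,
        norm_smul, hD _ (hgmem n), Real.norm_eq_abs, mul_one, sq_abs]
      ring
    nlinarith [sq_nonneg ‖φs (n + 1) - (φs n + t n • g (n + 1))‖, hpyth, hval]
  -- split on sInf S = 0
  rcases eq_or_lt_of_le hM0 with hM | hM
  · have h := hat n
    rw [← hM, zero_mul] at h
    have h2 : ‖φ - φs n‖ = 0 := by nlinarith [norm_nonneg (φ - φs n)]
    rw [h2, ← hM, zero_div]
  · -- base case
    have hbase : ‖φ - φs 0‖ ^ 2 ≤ (sInf S) ^ 2 := by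
      have h1 := hat 0
      have h2 : t 0 ≤ ‖φ - φs 0‖ := by
        have h3 := real_inner_le_norm (g 1) (φ - φs 0)
        rw [hD _ hg1, one_mul] at h3
        exact h3
      have h3 : ‖φ - φs 0‖ ^ 2 ≤ sInf S * ‖φ - φs 0‖ :=
        h1.trans (mul_le_mul_of_nonneg_left h2 hM0)
      nlinarith [sq_nonneg (sInf S - ‖φ - φs 0‖)]
    have hK : (0:ℝ) < (sInf S) ^ 2 := by positivity
    have hstep : ∀ m, ‖φ - φs (m + 1)‖ ^ 2
        ≤ ‖φ - φs m‖ ^ 2 - (‖φ - φs m‖ ^ 2) ^ 2 / (sInf S) ^ 2 := by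
      intro m
      have h1 : ‖φ - φs m‖ ^ 2 / sInf S ≤ t m := by
        rw [div_le_iff₀ hM]
        calc ‖φ - φs m‖ ^ 2 ≤ sInf S * t m := hat m
          _ = t m * sInf S := mul_comm _ _
      have h2 : (‖φ - φs m‖ ^ 2 / sInf S) ^ 2 ≤ (t m) ^ 2 := by
        apply pow_le_pow_left₀ (by positivity) h1
      rw [div_pow] at h2
      linarith [hrec m]
    have hmain := oga_rec ((sInf S) ^ 2) hK (fun m => ‖φ - φs m‖ ^ 2)
      (fun m => sq_nonneg _) hbase hstep n
    calc ‖φ - φs n‖ = Real.sqrt (‖φ - φs n‖ ^ 2) := (Real.sqrt_sq (norm_nonneg _)).symm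
      _ ≤ Real.sqrt ((sInf S) ^ 2 / ((n:ℝ) + 1)) := Real.sqrt_le_sqrt hmain
      _ = sInf S / Real.sqrt ((n:ℝ) + 1) := by
          rw [Real.sqrt_div (sq_nonneg _), Real.sqrt_sq hM0]
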